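/- arXiv:2306.06498 — 9 statements merged into one kernel-verified Lean document; each statement's English description precedes it below -/
import Mathlib

section
/- Let μ > 0, ω > 0, and T > 0. Define a = -e^{-μT}(cos(ωT) + (μ/ω) sin(ωT)). Then |a| < 1. -/
lemma neg_lt_sin_of_pos {x : ℝ} (hx : 0 < x) : -x < Real.sin x := by
  rcases le_or_gt x 1 with h | h
  · have : 0 < Real.sin x := Real.sin_pos_of_pos_of_lt_pi hx (lt_of_le_of_lt h (by
      have := Real.pi_gt_three; linarith))
    linarith
  · have h1 : (-1 : ℝ) ≤ Real.sin x := Real.neg_one_le_sin x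
    linarith

theorem abs_a_lt_one_underdamped (μ ω T : ℝ) (hμ : 0 < μ) (hω : 0 < ω) (hT : 0 < T) :
    |-(Real.exp (-(μ * T)) * (Real.cos (ω * T) + (μ / ω) * Real.sin (ω * T)))| < 1 := by
  set x := ω * T with hx
  have hxpos : 0 < x := mul_pos hω hT
  have hc : 0 < μ / ω := div_pos hμ hω
  have hsin : Real.sin x < x := Real.sin_lt hxpos
  have hsin' : -x < Real.sin x := neg_lt_sin_of_pos hxpos
  have hcos : Real.cos x ≤ 1 := Real.cos_le_one x
  have hcos' : -1 ≤ Real.cos x := Real.neg_one_le_cos x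
  have hcx : μ / ω * x = μ * T := by field_simp [hx]; ring
  have hkey : |Real.cos x + μ / ω * Real.sin x| < 1 + μ * T := by
    rw [abs_lt]
    constructor
    · have := mul_lt_mul_of_pos_left hsin' hc
      nlinarith
    · have := mul_lt_mul_of_pos_left hsin hc
      nlinarith
  have hexp : 1 + μ * T < Real.exp (μ * T) := by
    have := Real.add_one_lt_exp (x := μ * T) (by positivity)
    linarith
  have h1 : |Real.cos x + μ / ω * Real.sin x| < Real.exp (μ * T) := lt_trans hkey hexp
  rw [abs_neg, abs_mul, abs_of_pos (Real.exp_pos _)]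
  calc Real.exp (-(μ * T)) * |Real.cos x + μ / ω * Real.sin x|
      < Real.exp (-(μ * T)) * Real.exp (μ * T) :=
        mul_lt_mul_of_pos_left h1 (Real.exp_pos _)
    _ = 1 := by rw [← Real.exp_add]; simp
end

section
/- Let μ > ω₀ > 0 and T > 0. Define a = -e^{-μT}(cosh(ω₀T) + (μ/ω₀) sinh(ω₀T)). Then |a| < 1. -/
open Real

lemma sinh_lt_mul_cosh {t : ℝ} (ht : 0 < t) : Real.sinh t < t * Real.cosh t := by
  have h : StrictMonoOn (fun s : ℝ => s * Real.cosh s - Real.sinh s) (Set.Ici 0) := by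
    refine strictMonoOn_of_deriv_pos (convex_Ici _) (by fun_prop) fun s hs => ?_
    rw [interior_Ici] at hs
    have : deriv (fun s : ℝ => s * Real.cosh s - Real.sinh s) s = s * Real.sinh s := by
      have : HasDerivAt (fun s : ℝ => s * Real.cosh s - Real.sinh s)
          (1 * Real.cosh s + s * Real.sinh s - Real.cosh s) s :=
        ((hasDerivAt_id s).mul (Real.hasDerivAt_cosh s)).sub (Real.hasDerivAt_sinh s)
      rw [this.deriv]; ring
    rw [this]
    exact mul_pos hs (Real.sinh_pos_iff.2 hs)
  have := h (Set.self_mem_Ici) (Set.mem_Ici.2 ht.le) ht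
  simpa using this

lemma mul_sinh_lt {x y : ℝ} (hx : 0 < x) (hxy : x < y) :
    y * Real.sinh x < x * Real.sinh y := by
  have h : StrictMonoOn (fun s : ℝ => x * Real.sinh s - s * Real.sinh x) (Set.Ici x) := by
    refine strictMonoOn_of_deriv_pos (convex_Ici _) (by fun_prop) fun s hs => ?_
    rw [interior_Ici] at hs
    have hd : deriv (fun s : ℝ => x * Real.sinh s - s * Real.sinh x) s
        = x * Real.cosh s - Real.sinh x := by
      have : HasDerivAt (fun s : ℝ => x * Real.sinh s - s * Real.sinh x)
          (x * Real.cosh s - 1 * Real.sinh x) s :=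
        ((Real.hasDerivAt_sinh s).const_mul x).sub ((hasDerivAt_id s).mul_const _)
      rw [this.deriv]; ring
    rw [hd]
    have h1 : Real.sinh x < x * Real.cosh x := sinh_lt_mul_cosh hx
    have h2 : x * Real.cosh x ≤ x * Real.cosh s := by
      refine mul_le_mul_of_nonneg_left ?_ hx.le
      exact Real.cosh_le_cosh.2 (by rw [abs_of_pos hx, abs_of_pos (hx.trans hs)]; exact hs.le)
    linarith
  have := h (Set.self_mem_Ici) (Set.mem_Ici.2 hxy.le) hxy
  simpa using this

theorem abs_a_lt_one_overdamped (μ ω₀ T : ℝ) (hμω : ω₀ < μ) (hω : 0 < ω₀) (hT : 0 < T) :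
    |-(Real.exp (-(μ * T)) * (Real.cosh (ω₀ * T) + (μ / ω₀) * Real.sinh (ω₀ * T)))| < 1 := by
  set x := ω₀ * T with hxdef
  set y := μ * T with hydef
  have hx : 0 < x := mul_pos hω hT
  have hxy : x < y := by
    apply mul_lt_mul_of_pos_right hμω hT
  have hratio : μ / ω₀ = y / x := by
    field_simp [hxdef, hydef]
    ring
  have hsinh : 0 < Real.sinh x := Real.sinh_pos_iff.2 hx
  have hpos : 0 < Real.cosh x + (μ / ω₀) * Real.sinh x := by
    have : 0 < (μ / ω₀) * Real.sinh x :=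
      mul_pos (div_pos (hω.trans hμω) hω) hsinh
    have := Real.cosh_pos (x := x)
    linarith
  rw [abs_neg, abs_of_pos (mul_pos (Real.exp_pos _) hpos)]
  have key : Real.cosh x + (μ / ω₀) * Real.sinh x < Real.exp y := by
    have h1 : (μ / ω₀) * Real.sinh x < Real.sinh y := by
      rw [hratio, div_mul_eq_mul_div, div_lt_iff₀ hx, mul_comm (Real.sinh y) x]
      exact mul_sinh_lt hx hxy
    have h2 : Real.cosh x < Real.cosh y := by
      rw [Real.cosh_lt_cosh, abs_of_pos hx, abs_of_pos (hx.trans hxy)]; exact hxy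
    have := Real.cosh_add_sinh y
    linarith
  calc Real.exp (-y) * (Real.cosh x + (μ / ω₀) * Real.sinh x)
      < Real.exp (-y) * Real.exp y := by
        exact mul_lt_mul_of_pos_left key (Real.exp_pos _)
    _ = 1 := by rw [← Real.exp_add]; simp
end

section
/- For all x > 0 and y > 1, y·sinh(x) − cosh(x) > −e^{-xy}. -/
theorem sinh_cosh_exp_bound (x y : ℝ) (hx : 0 < x) (hy : 1 < y) :
    y * Real.sinh x - Real.cosh x > -Real.exp (-(x * y)) := by
  rw [Real.sinh_eq, Real.cosh_eq]
  have hb : 0 < Real.exp (-x) := Real.exp_pos _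
  have h1 : -(x * (y - 1)) + 1 < Real.exp (-(x * (y - 1))) := by
    apply Real.add_one_lt_exp
    nlinarith
  have h2 : (2 * x) + 1 < Real.exp (2 * x) := by
    apply Real.add_one_lt_exp
    nlinarith
  have e1 : Real.exp (-(x * y)) = Real.exp (-x) * Real.exp (-(x * (y - 1))) := by
    rw [← Real.exp_add]; ring_nf
  have e2 : Real.exp (2 * x) = Real.exp x * Real.exp x := by
    rw [← Real.exp_add]; ring_nf
  have e3 : Real.exp x * Real.exp (-x) = 1 := by
    rw [← Real.exp_add]; simp
  rw [e1]
  have h3 : Real.exp (-x) * Real.exp (-(x * (y - 1))) >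
      Real.exp (-x) * (-(x * (y - 1)) + 1) := by
    exact (mul_lt_mul_of_pos_left h1 hb)
  have h4 : Real.exp x - Real.exp (-x) > 2 * x * Real.exp (-x) := by
    have := mul_lt_mul_of_pos_left h2 hb
    nlinarith [Real.exp_pos x]
  nlinarith [mul_pos hb (sub_pos.mpr hy), mul_pos (mul_pos hb (sub_pos.mpr hy)) hx,
    mul_lt_mul_of_pos_right h4 (sub_pos.mpr hy)]
end

section
/- For all φ ∈ [0, π) and y > 0, y · (sin φ / φ) − cos φ > −e^{-y}, where sin φ / φ is interpreted as 1 when φ = 0. -/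
theorem sinc_cos_exp_bound (φ y : ℝ) (hφ0 : 0 ≤ φ) (hφπ : φ < Real.pi) (hy : 0 < y) :
    y * (if φ = 0 then 1 else Real.sin φ / φ) - Real.cos φ > -Real.exp (-y) := by
  have hexp : 1 - y < Real.exp (-y) := by
    have := Real.add_one_lt_exp (show (-y) ≠ 0 by linarith)
    linarith
  by_cases h0 : φ = 0
  · rw [if_pos h0]
    simp [h0]
    linarith
  · rw [if_neg h0]
    have hφ : 0 < φ := lt_of_le_of_ne hφ0 (Ne.symm h0)
    have hsin : 0 < Real.sin φ := Real.sin_pos_of_pos_of_lt_pi hφ hφπ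
    have hexp0 : 0 < Real.exp (-y) := Real.exp_pos _
    by_cases hc : Real.cos φ ≤ 0
    · have : 0 < y * (Real.sin φ / φ) := by positivity
      linarith
    · push_neg at hc
      have hlt : φ < Real.pi / 2 := by
        by_contra h
        push_neg at h
        have := Real.cos_nonpos_of_pi_div_two_le_of_le h (by linarith [Real.pi_pos])
        linarith
      have htan := Real.lt_tan hφ hlt
      rw [Real.tan_eq_sin_div_cos] at htan
      have hkey : Real.cos φ < Real.sin φ / φ := by
        rw [lt_div_iff₀ hc] at htan
        rw [lt_div_iff₀ hφ]
        nlinarith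
      have hcos1 : Real.cos φ ≤ 1 := Real.cos_le_one φ
      rcases le_or_gt 1 y with h1 | h1
      · nlinarith
      · nlinarith
end

section
/- Let ν ≥ 1, and let a, b, c, d be real numbers. Let M be the (ν+1)×(ν+1) matrix with first row (a, b, b, ..., b), second row (c, d, d, ..., d), and for i = 3, ..., ν+1, the i-th row has a 1 in column i−1 and zeros elsewhere. Then the characteristic polynomial satisfies det(M − λI) = 0 if and only if ((a−1)d − bc)·(1 − λ^ν)/(1 − λ) + d − (a + d)λ^ν + λ^{ν+1} = 0 for λ ≠ 1, where (1 − λ^ν)/(1 − λ) denotes the geometric sum 1 + λ + ... + λ^{ν−1}. -/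
open Matrix Finset

private lemma two_by_two (α β γ δ : ℝ) :
    (∃ x t : ℝ, (x ≠ 0 ∨ t ≠ 0) ∧ α*x + β*t = 0 ∧ γ*x + δ*t = 0) ↔ α*δ - β*γ = 0 := by
  constructor
  · rintro ⟨x, t, hxt, h1, h2⟩
    rcases hxt with hx | ht
    · have h : (α*δ - β*γ) * x = 0 := by linear_combination δ * h1 - β * h2
      rcases mul_eq_zero.mp h with h | h
      · exact h
      · exact absurd h hx
    · have h : (α*δ - β*γ) * t = 0 := by linear_combination α * h2 - γ * h1
      rcases mul_eq_zero.mp h with h | h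
      · exact h
      · exact absurd h ht
  · intro h
    by_cases hαβ : α = 0 ∧ β = 0
    · by_cases hγδ : γ = 0 ∧ δ = 0
      · exact ⟨1, 0, Or.inl one_ne_zero, by simp [hαβ.1, hαβ.2], by simp [hγδ.1, hγδ.2]⟩
      · refine ⟨δ, -γ, ?_, by simp [hαβ.1, hαβ.2], by ring⟩
        rcases not_and_or.mp hγδ with h' | h'
        · exact Or.inr (by simpa using h')
        · exact Or.inl h'
    · refine ⟨β, -α, ?_, by ring, by linear_combination -h⟩
      rcases not_and_or.mp hαβ with h' | h'
      · exact Or.inr (neg_ne_zero.mpr h')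
      · exact Or.inl h'

open Matrix Finset in
theorem char_eq_of_jacobian (ν : ℕ) (hν : 1 ≤ ν) (a b c d : ℝ)
    (M : Matrix (Fin (ν + 1)) (Fin (ν + 1)) ℝ)
    (hM : ∀ i j : Fin (ν + 1),
      M i j = if (i : ℕ) = 0 then (if (j : ℕ) = 0 then a else b)
              else if (i : ℕ) = 1 then (if (j : ℕ) = 0 then c else d)
              else (if (j : ℕ) + 1 = (i : ℕ) then 1 else 0))
    (lam : ℝ) (hlam : lam ≠ 1) :
    (M - lam • (1 : Matrix (Fin (ν + 1)) (Fin (ν + 1)) ℝ)).det = 0 ↔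
      ((a - 1) * d - b * c) * (∑ i ∈ range ν, lam ^ i)
        + d - (a + d) * lam ^ ν + lam ^ (ν + 1) = 0 := by
  classical
  set A := M - lam • (1 : Matrix (Fin (ν + 1)) (Fin (ν + 1)) ℝ) with hAdef
  set S : ℝ := ∑ i ∈ range ν, lam ^ i with hSdef
  have hgeom : S * (lam - 1) = lam ^ ν - 1 := geom_sum_mul lam ν
  have hAe : ∀ i j : Fin (ν+1), A i j =
      (if (i : ℕ) = 0 then (if (j : ℕ) = 0 then a else b)
        else if (i : ℕ) = 1 then (if (j : ℕ) = 0 then c else d)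
        else (if (j : ℕ) + 1 = (i : ℕ) then 1 else 0))
      - lam * (if i = j then 1 else 0) := by
    intro i j
    simp [hAdef, Matrix.sub_apply, Matrix.smul_apply, Matrix.one_apply, hM i j]
  have hT : ∑ j : Fin ν, lam ^ (ν - ((j:ℕ)+1)) = S := by
    rw [Fin.sum_univ_eq_sum_range (fun k => lam ^ (ν - (k+1))) ν, hSdef,
      ← Finset.sum_range_reflect (fun k => lam ^ k) ν]
    exact Finset.sum_congr rfl (fun k hk => by congr 1; omega)
  -- row sums
  have key0 : ∀ v : Fin (ν+1) → ℝ, ∑ j, A 0 j * v j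
      = (a - lam) * v 0 + b * ∑ j : Fin ν, v j.succ := by
    intro v
    rw [Fin.sum_univ_succ]
    have h0 : A 0 0 * v 0 = (a - lam) * v 0 := by
      rw [hAe]; norm_num
    have h1 : ∀ j : Fin ν, A 0 j.succ * v j.succ = b * v j.succ := by
      intro j
      rw [hAe]
      have e1 : ((0 : Fin (ν+1)) : ℕ) = 0 := rfl
      have e2 : ((j.succ : Fin (ν+1)) : ℕ) = (j:ℕ) + 1 := rfl
      rw [e1, e2]
      have : ¬((0 : Fin (ν+1)) = j.succ) := (Fin.succ_ne_zero j).symm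
      simp [this]
    rw [h0, Finset.sum_congr rfl (fun j _ => h1 j), ← Finset.mul_sum]
  have key1 : ∀ v : Fin (ν+1) → ℝ, ∑ j, A ⟨1, by omega⟩ j * v j
      = c * v 0 + d * (∑ j : Fin ν, v j.succ) - lam * v ⟨1, by omega⟩ := by
    intro v
    have hsplit : ∀ j : Fin (ν+1), A ⟨1, by omega⟩ j * v j
        = (if (j:ℕ) = 0 then c * v j else d * v j)
          - (if (⟨1, by omega⟩ : Fin (ν+1)) = j then lam * v j else 0) := by
      intro j
      rw [hAe]
      simp only [show ((⟨1, by omega⟩ : Fin (ν+1)) : ℕ) = 1 from rfl]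
      norm_num
      split_ifs <;> ring
    rw [Finset.sum_congr rfl (fun j _ => hsplit j), Finset.sum_sub_distrib,
      Finset.sum_ite_eq]
    simp only [Finset.mem_univ, if_pos]
    have : ∑ j : Fin (ν+1), (if (j:ℕ) = 0 then c * v j else d * v j)
        = c * v 0 + ∑ j : Fin ν, d * v j.succ := by
      rw [Fin.sum_univ_succ]
      simp [Fin.val_succ]
    rw [this, ← Finset.mul_sum]
  have key2 : ∀ v : Fin (ν+1) → ℝ, ∀ i : Fin (ν+1), 2 ≤ (i:ℕ) →
      ∑ j, A i j * v j = v ⟨(i:ℕ) - 1, by have := i.isLt; omega⟩ - lam * v i := by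
    intro v i hi
    have hi2 := i.isLt
    have hsplit : ∀ j : Fin (ν+1), A i j * v j
        = (if j = (⟨(i:ℕ) - 1, by omega⟩ : Fin (ν+1)) then v j else 0)
          - (if i = j then lam * v j else 0) := by
      intro j
      rw [hAe]
      rw [if_neg (by omega : ¬ (i:ℕ) = 0), if_neg (by omega : ¬ (i:ℕ) = 1)]
      have e1 : ((j:ℕ) + 1 = (i:ℕ)) ↔ (j = (⟨(i:ℕ) - 1, by omega⟩ : Fin (ν+1))) := by
        rw [Fin.ext_iff]; simp; omega
      simp only [e1]
      split_ifs with h1 h2 h2 <;> first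
        | ring
        | (subst h1; simp_all [Fin.ext_iff]; omega)
    rw [Finset.sum_congr rfl (fun j _ => hsplit j), Finset.sum_sub_distrib,
      Finset.sum_ite_eq', Finset.sum_ite_eq]
    simp only [Finset.mem_univ, if_pos]
  -- main equivalence
  have main : A.det = 0 ↔ ∃ x t : ℝ, (x ≠ 0 ∨ t ≠ 0) ∧
      (a - lam) * x + (b * S) * t = 0 ∧ c * x + (d * S - lam ^ ν) * t = 0 := by
    rw [← Matrix.exists_mulVec_eq_zero_iff]
    constructor
    · rintro ⟨v, hv0, hv⟩
      have hrow : ∀ i, ∑ j, A i j * v j = 0 := by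
        intro i
        have := congrFun hv i
        simpa [Matrix.mulVec, dotProduct] using this
      set t := v ⟨ν, by omega⟩ with htdef
      have chain : ∀ m, m < ν → v ⟨ν - m, by omega⟩ = lam ^ m * t := by
        intro m
        induction m with
        | zero =>
          intro _
          simp [htdef]
        | succ m ih =>
          intro hm
          have hm' : m < ν := by omega
          have hrw := key2 v ⟨ν - m, by omega⟩ (by simp; omega)
          have h0 := hrow ⟨ν - m, by omega⟩
          rw [hrw] at h0
          have hidx : (⟨(((⟨ν - m, by omega⟩ : Fin (ν+1)) : ℕ)) - 1,
              by have := (⟨ν - m, by omega⟩ : Fin (ν+1)).isLt; omega⟩ : Fin (ν+1))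
              = ⟨ν - (m+1), by omega⟩ := by
            apply Fin.ext; simp; omega
          rw [hidx] at h0
          have hv1 : v ⟨ν - (m+1), by omega⟩ = lam * v ⟨ν - m, by omega⟩ := by linarith
          rw [hv1, ih hm']
          ring
      have hsum : ∑ j : Fin ν, v j.succ = S * t := by
        have hterm : ∀ j : Fin ν, v j.succ = lam ^ (ν - ((j:ℕ)+1)) * t := by
          intro j
          have hj := j.isLt
          have := chain (ν - ((j:ℕ)+1)) (by omega)
          have hidx : (⟨ν - (ν - ((j:ℕ)+1)), by omega⟩ : Fin (ν+1)) = j.succ := by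
            apply Fin.ext; simp [Fin.val_succ]; omega
          rw [hidx] at this
          exact this
        rw [Finset.sum_congr rfl (fun j _ => hterm j), ← Finset.sum_mul, hT]
      have hv1v : v ⟨1, by omega⟩ = lam ^ (ν - 1) * t := by
        have := chain (ν - 1) (by omega)
        have hidx : (⟨ν - (ν - 1), by omega⟩ : Fin (ν+1)) = ⟨1, by omega⟩ := by
          apply Fin.ext; simp; omega
        rw [hidx] at this
        exact this
      have hE1 : (a - lam) * (v 0) + (b * S) * t = 0 := by
        have h0 := hrow 0
        rw [key0 v, hsum] at h0
        linear_combination h0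
      have hE2 : c * (v 0) + (d * S - lam ^ ν) * t = 0 := by
        have h1 := hrow ⟨1, by omega⟩
        rw [key1 v, hsum, hv1v] at h1
        have hp : lam * lam ^ (ν - 1) = lam ^ ν := by
          rw [← pow_succ']; congr 1; omega
        linear_combination h1 + t * hp
      refine ⟨v 0, t, ?_, hE1, hE2⟩
      by_contra hcon
      push_neg at hcon
      obtain ⟨hx0, ht0⟩ := hcon
      apply hv0
      funext j
      by_cases hj : (j:ℕ) = 0
      · have : j = 0 := Fin.ext (by simpa using hj)
        rw [this, hx0]; rfl
      · have hjlt := j.isLt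
        have := chain (ν - (j:ℕ)) (by omega)
        have hidx : (⟨ν - (ν - (j:ℕ)), by omega⟩ : Fin (ν+1)) = j := by
          apply Fin.ext; simp; omega
        rw [hidx, ht0] at this
        simpa using this
    · rintro ⟨x, t, hxt, hE1, hE2⟩
      set v : Fin (ν+1) → ℝ := fun j => if (j:ℕ) = 0 then x else lam ^ (ν - (j:ℕ)) * t
        with hvdef
      have hv0 : v ≠ 0 := by
        intro h
        rcases hxt with hx | ht
        · exact hx (by simpa [hvdef] using congrFun h 0)
        · have := congrFun h ⟨ν, by omega⟩
          simp only [hvdef, Pi.zero_apply] at this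
          rw [if_neg (show ¬ (((⟨ν, by omega⟩ : Fin (ν+1)) : ℕ) = 0) by simp; omega)] at this
          simp at this
          exact ht this
      refine ⟨v, hv0, ?_⟩
      have hsum : ∑ j : Fin ν, v j.succ = S * t := by
        have hterm : ∀ j : Fin ν, v j.succ = lam ^ (ν - ((j:ℕ)+1)) * t := by
          intro j
          simp [hvdef, Fin.val_succ]
        rw [Finset.sum_congr rfl (fun j _ => hterm j), ← Finset.sum_mul, hT]
      funext i
      have hmv : A.mulVec v i = ∑ j, A i j * v j := by
        simp [Matrix.mulVec, dotProduct]
      rw [Pi.zero_apply, hmv]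
      have hilt := i.isLt
      rcases Nat.lt_or_ge (i:ℕ) 2 with hi | hi
      · rcases Nat.lt_or_ge (i:ℕ) 1 with hi0 | hi1
        · have : i = 0 := Fin.ext (by simpa using Nat.lt_one_iff.mp hi0)
          rw [this, key0 v, hsum]
          have hv00 : v 0 = x := by simp [hvdef]
          rw [hv00]
          linear_combination hE1
        · have : i = ⟨1, by omega⟩ := Fin.ext (by simp; omega)
          rw [this, key1 v, hsum]
          have hv00 : v 0 = x := by simp [hvdef]
          have hv1v : v ⟨1, by omega⟩ = lam ^ (ν - 1) * t := by
            simp only [hvdef]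
            rw [if_neg (by norm_num : ¬ (((⟨1, by omega⟩ : Fin (ν+1)) : ℕ) = 0))]
          rw [hv00, hv1v]
          have hp : lam * lam ^ (ν - 1) = lam ^ ν := by
            rw [← pow_succ']; congr 1; omega
          linear_combination hE2 - t * hp
      · rw [key2 v i hi]
        have h1 : v ⟨(i:ℕ) - 1, by omega⟩ = lam ^ (ν - ((i:ℕ) - 1)) * t := by
          simp only [hvdef]
          rw [if_neg (by simp; omega : ¬ (((⟨(i:ℕ) - 1, by omega⟩ : Fin (ν+1)) : ℕ) = 0))]
        have h2 : v i = lam ^ (ν - (i:ℕ)) * t := by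
          simp only [hvdef]
          rw [if_neg (by omega : ¬ ((i:ℕ) = 0))]
        rw [h1, h2]
        have hp : lam ^ (ν - ((i:ℕ) - 1)) = lam * lam ^ (ν - (i:ℕ)) := by
          rw [← pow_succ']; congr 1; omega
        rw [hp]; ring
  rw [main, two_by_two]
  constructor
  · intro h
    linear_combination h + d * hgeom
  · intro h
    linear_combination h - d * hgeom
end

section
/- Let ν ≥ 1 be an integer, let μ > 0, ω > 0, T > 0 and μT ≠ 0, and define a = −e^{-μT}(cos(ωT) + (μ/ω)sin(ωT)), d = −1 − e^{-μT}(cos(ωT) − (μ/ω)sin(ωT)), and A = 1 + 2cos(ωT)e^{-μT} + e^{-2μT}. Then λ = 1 is not a root of the characteristic equation 0 = A·(1 − λ^ν)/(1 − λ) + d − (a + d)λ^ν + λ^{ν+1}, i.e., A·ν + (1 − a) ≠ 0. -/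
set_option maxHeartbeats 1000000


theorem no_eigenvalue_one (ν : ℕ) (hν : 1 ≤ ν) (μ ω T : ℝ)
    (hμ : 0 < μ) (hω : 0 < ω) (hT : 0 < T) (hμT : μ * T ≠ 0) :
    (1 + 2 * Real.cos (ω * T) * Real.exp (-(μ * T)) + Real.exp (-(2 * μ * T))) * (ν : ℝ)
      + (1 - (-(Real.exp (-(μ * T)) * (Real.cos (ω * T) + (μ / ω) * Real.sin (ω * T))))) ≠ 0 := by
  set x := μ * T with hx
  have hx0 : 0 < x := mul_pos hμ hT
  set E := Real.exp (-x) with hE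
  have hE0 : 0 < E := Real.exp_pos _
  have hE1 : E < 1 := by
    rw [hE]
    have := Real.exp_lt_one_iff.mpr (by linarith : -x < 0)
    exact this
  have hE2 : Real.exp (-(2 * μ * T)) = E ^ 2 := by
    rw [hE, ← Real.exp_nat_mul, hx]
    norm_num
    ring_nf
  set c := Real.cos (ω * T) with hc
  set s := Real.sin (ω * T) with hs
  have hcs : c ^ 2 + s ^ 2 = 1 := by
    rw [hc, hs]; exact Real.cos_sq_add_sin_sq _
  have hc1 : -1 ≤ c := Real.neg_one_le_cos _
  have hc1' : c ≤ 1 := Real.cos_le_one _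
  have hs1 : -1 ≤ s := Real.neg_one_le_sin _
  have hs1' : s ≤ 1 := Real.sin_le_one _
  have hA : 0 < 1 + 2 * c * E + E ^ 2 := by nlinarith [sq_nonneg (E + c), sq_nonneg s]
  have hν1 : (1 : ℝ) ≤ (ν : ℝ) := by exact_mod_cast hν
  have hAν : (1 + 2 * c * E + E ^ 2) * 1 ≤ (1 + 2 * c * E + E ^ 2) * (ν : ℝ) :=
    mul_le_mul_of_nonneg_left hν1 (le_of_lt hA)
  rw [hE2]
  rcases le_or_gt 0 s with hsn | hsn
  · -- sin nonneg case
    have hms : 0 ≤ E * ((μ / ω) * s) := by positivity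
    have : 0 < (1 + 2 * c * E + E ^ 2) * (ν : ℝ) + (1 + E * (c + (μ / ω) * s)) := by
      nlinarith [mul_pos (sub_pos.mpr hE1) (by linarith : (0:ℝ) < 2 - E)]
    intro h; rw [show (1 : ℝ) - -(E * (c + μ / ω * s)) = 1 + E * (c + μ / ω * s) by ring] at h
    linarith
  · -- sin negative: then ω*T > π
    have hy : Real.pi < ω * T := by
      by_contra hle
      push_neg at hle
      have : 0 ≤ s := Real.sin_nonneg_of_nonneg_of_le_pi (by positivity) hle
      linarith
    have hπ : (0:ℝ) < Real.pi := Real.pi_pos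
    -- (μ/ω) * s ≥ -(x / π)
    have hms : -(x / Real.pi) ≤ (μ / ω) * s := by
      have hωT : 0 < ω * T := by positivity
      have h1 : (μ / ω) * s = (x / (ω * T)) * s := by
        field_simp [hx]
        ring
      rw [h1]
      have h2 : x / (ω * T) ≤ x / Real.pi := by
        apply div_le_div_of_nonneg_left (le_of_lt hx0) hπ (le_of_lt hy)
      have h3 : (x / (ω * T)) * s ≥ (x / (ω * T)) * (-1) := by
        apply mul_le_mul_of_nonneg_left hs1 (by positivity)
      nlinarith
    have hEx : x * E ≤ 1 - E := by
      have h := Real.add_one_le_exp x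
      have : (x + 1) * E ≤ Real.exp x * E := mul_le_mul_of_nonneg_right h (le_of_lt hE0)
      rw [hE, ← Real.exp_add] at this
      simp at this
      nlinarith [Real.exp_pos x]
    have hπ1 : (1:ℝ) < Real.pi := by nlinarith [Real.pi_gt_three]
    have key : 0 < (1 + 2 * c * E + E ^ 2) * (ν : ℝ) + (1 + E * (c + (μ / ω) * s)) := by
      have hb : E * (c + (μ / ω) * s) ≥ E * (-1 + -(x / Real.pi)) := by
        apply mul_le_mul_of_nonneg_left _ (le_of_lt hE0)
        linarith
      have hxπ : x / Real.pi < x := by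
        rw [div_lt_iff₀ hπ]
        nlinarith [mul_lt_mul_of_pos_left hπ1 hx0]
      -- total ≥ (1-E)^2 *ν + 1 - E - E*(x/π) ≥ (1-E)(2-E) - E*x/π > 0
      have h5 : E * (x / Real.pi) < E * x := mul_lt_mul_of_pos_left hxπ hE0
      nlinarith [mul_pos (sub_pos.mpr hE1) (by linarith : (0:ℝ) < 2 - E)]
    intro h; rw [show (1 : ℝ) - -(E * (c + μ / ω * s)) = 1 + E * (c + μ / ω * s) by ring] at h
    linarith
end

section
/- Let μ > 0, ω > 0 and T > 0 with ωT < π. Define d = −1 − e^{-μT}(cos(ωT) − (μ/ω)sin(ωT)). Then (1 + d) + e^{-2μT} > 0. -/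
theorem no_pitchfork_underdamped (μ ω T : ℝ) (hμ : 0 < μ) (hω : 0 < ω) (hT : 0 < T)
    (hωT : ω * T < Real.pi) :
    (1 + (-1 - Real.exp (-(μ * T)) * (Real.cos (ω * T) - (μ / ω) * Real.sin (ω * T))))
      + Real.exp (-(2 * μ * T)) > 0 := by
  have hθ0 : 0 < ω * T := mul_pos hω hT
  have hs : 0 < Real.sin (ω * T) := Real.sin_pos_of_pos_of_lt_pi hθ0 hωT
  have hE : 0 < Real.exp (-(μ * T)) := Real.exp_pos _
  have h2 : Real.exp (-(2 * μ * T)) = Real.exp (-(μ * T)) * Real.exp (-(μ * T)) := by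
    rw [← Real.exp_add]; ring_nf
  have hk : 0 < μ / ω := div_pos hμ hω
  have key : (μ / ω) * Real.sin (ω * T) + Real.exp (-(μ * T)) - Real.cos (ω * T) > 0 := by
    rcases le_or_gt (Real.cos (ω * T)) 0 with hc | hc
    · have := mul_pos hk hs
      linarith
    · have hθ : ω * T < Real.pi / 2 := by
        by_contra h
        push_neg at h
        exact absurd (Real.cos_nonpos_of_pi_div_two_le_of_le h (by linarith [Real.pi_pos]))
          (not_le.mpr hc)
      have htan : ω * T < Real.tan (ω * T) := Real.lt_tan hθ0 hθ
      have hsc : ω * T * Real.cos (ω * T) < Real.sin (ω * T) := by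
        rw [Real.tan_eq_sin_div_cos] at htan
        have := mul_lt_mul_of_pos_right htan hc
        rwa [div_mul_cancel₀ _ (ne_of_gt hc)] at this
      have hks : μ * T * Real.cos (ω * T) < (μ / ω) * Real.sin (ω * T) := by
        have h1 := mul_lt_mul_of_pos_left hsc hk
        have heq : (μ / ω) * (ω * T * Real.cos (ω * T)) = μ * T * Real.cos (ω * T) := by
          field_simp
        linarith [heq ▸ h1]
      have hexp : 1 - μ * T < Real.exp (-(μ * T)) := by
        have := Real.add_one_lt_exp (x := -(μ * T)) (by nlinarith)
        linarith
      rcases le_or_gt 1 (μ * T) with h1 | h1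
      · nlinarith
      · nlinarith [Real.cos_le_one (ω * T)]
  rw [h2]
  nlinarith [mul_pos hE key]
end

section
/- Let μ > ω₀ > 0 and T > 0. Define d = −1 − e^{-μT}(cosh(ω₀T) − (μ/ω₀)sinh(ω₀T)). Then (1 + d) + e^{-2μT} > 0. -/
lemma aux_mono (ω₀ T : ℝ) (hω : 0 < ω₀) (hT : 0 < T) :
    StrictMonoOn (fun m => Real.exp (-(m * T)) + (m / ω₀) * Real.sinh (ω₀ * T))
      (Set.Ici ω₀) := by
  apply strictMonoOn_of_deriv_pos (convex_Ici ω₀)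
  · fun_prop
  · intro m hm
    rw [interior_Ici] at hm
    have hm' : ω₀ < m := hm
    have h1 : HasDerivAt (fun m : ℝ => Real.exp (-(m * T)) + (m / ω₀) * Real.sinh (ω₀ * T))
        (Real.exp (-(m * T)) * (-T) + (1 / ω₀) * Real.sinh (ω₀ * T)) m := by
      have hb : HasDerivAt (fun m : ℝ => -(m * T)) (-T) m :=
        (hasDerivAt_mul_const T).neg
      exact (hb.exp).add (((hasDerivAt_id m).div_const ω₀).mul_const _)
    rw [h1.deriv]
    have hx : 0 < ω₀ * T := mul_pos hω hT
    have hs : ω₀ * T < Real.sinh (ω₀ * T) := Real.self_lt_sinh_iff.mpr hx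
    have he : Real.exp (-(m * T)) < 1 := by
      apply Real.exp_lt_one_iff.mpr
      nlinarith
    have hep : 0 < Real.exp (-(m * T)) := Real.exp_pos _
    have : (1 / ω₀) * Real.sinh (ω₀ * T) > T := by
      rw [gt_iff_lt, one_div, inv_mul_eq_div, lt_div_iff₀ hω]
      nlinarith
    nlinarith

theorem no_pitchfork_overdamped (μ ω₀ T : ℝ) (hμω : ω₀ < μ) (hω : 0 < ω₀) (hT : 0 < T) :
    (1 + (-1 - Real.exp (-(μ * T)) * (Real.cosh (ω₀ * T) - (μ / ω₀) * Real.sinh (ω₀ * T))))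
      + Real.exp (-(2 * μ * T)) > 0 := by
  have key := aux_mono ω₀ T hω hT (Set.self_mem_Ici) (Set.mem_Ici.mpr hμω.le) hμω
  simp only [div_self hω.ne', one_mul] at key
  have h0 : Real.exp (-(ω₀ * T)) + Real.sinh (ω₀ * T) = Real.cosh (ω₀ * T) := by
    rw [← Real.cosh_sub_sinh]; ring
  rw [h0] at key
  have hA : (0:ℝ) < Real.exp (-(μ * T)) := Real.exp_pos _
  have h2 : Real.exp (-(2 * μ * T)) = Real.exp (-(μ * T)) * Real.exp (-(μ * T)) := by
    rw [← Real.exp_add]; ring_nf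
  rw [h2]
  nlinarith [key, hA]
end

section
/- For ν = 0, the characteristic equation 0 = ((a−1)d − bc)·(1−λ^ν)/(1−λ) + d − (a+d)λ^ν + λ^{ν+1} reduces to λ = a, and hence, since |a| < 1 whenever μ > 0, T > 0 and either (ω real positive) or (ω = iω₀ with μ > ω₀ > 0), the unique characteristic root of the linearized slowly oscillating map has modulus strictly less than 1. -/
open Real in
lemma aux_hyp (μ ω₀ T : ℝ) (hω : 0 < ω₀) (hωμ : ω₀ < μ) (hT : 0 < T) :
    ω₀ * Real.cosh (ω₀ * T) + μ * Real.sinh (ω₀ * T) < ω₀ * Real.exp (μ * T) := by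
  have hμ0 : 0 < μ := hω.trans hωμ
  set h : ℝ → ℝ := fun t => ω₀ * Real.exp (μ * t) - ω₀ * Real.cosh (ω₀ * t) - μ * Real.sinh (ω₀ * t) with hh
  have hderiv : ∀ t : ℝ, HasDerivAt h
      (ω₀ * (μ * Real.exp (μ * t)) - ω₀ * (ω₀ * Real.sinh (ω₀ * t)) - μ * (ω₀ * Real.cosh (ω₀ * t))) t := by
    intro t
    have h1 : HasDerivAt (fun t : ℝ => Real.exp (μ * t)) (μ * Real.exp (μ * t)) t := by
      simpa [mul_comm, Function.comp_def] using (Real.hasDerivAt_exp (μ * t)).comp t ((hasDerivAt_id t).const_mul μ)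
    have h2 : HasDerivAt (fun t : ℝ => Real.cosh (ω₀ * t)) (ω₀ * Real.sinh (ω₀ * t)) t := by
      simpa [mul_comm, Function.comp_def] using (Real.hasDerivAt_cosh (ω₀ * t)).comp t ((hasDerivAt_id t).const_mul ω₀)
    have h3 : HasDerivAt (fun t : ℝ => Real.sinh (ω₀ * t)) (ω₀ * Real.cosh (ω₀ * t)) t := by
      simpa [mul_comm, Function.comp_def] using (Real.hasDerivAt_sinh (ω₀ * t)).comp t ((hasDerivAt_id t).const_mul ω₀)
    exact ((h1.const_mul ω₀).sub (h2.const_mul ω₀)).sub (h3.const_mul μ)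
  have hmono : StrictMonoOn h (Set.Ici 0) := by
    apply strictMonoOn_of_deriv_pos (convex_Ici 0)
    · exact Continuous.continuousOn (by continuity)
    · intro t ht
      rw [interior_Ici] at ht
      have ht0 : 0 < t := ht
      rw [(hderiv t).deriv]
      have hlt : ω₀ * t < μ * t := by nlinarith
      have hexp : Real.cosh (μ * t) + Real.sinh (μ * t) = Real.exp (μ * t) :=
        Real.cosh_add_sinh (μ * t)
      have hc : Real.cosh (ω₀ * t) ≤ Real.cosh (μ * t) := by
        apply Real.cosh_le_cosh.2
        rw [abs_of_pos (mul_pos hω ht0), abs_of_pos (mul_pos hμ0 ht0)]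
        exact hlt.le
      have hs : Real.sinh (ω₀ * t) < Real.sinh (μ * t) := Real.sinh_lt_sinh.2 hlt
      have hspos : 0 < Real.sinh (ω₀ * t) := by
        rw [← Real.sinh_zero]; exact Real.sinh_lt_sinh.2 (mul_pos hω ht0)
      have p1 : ω₀ * μ * Real.sinh (ω₀ * t) < ω₀ * μ * Real.sinh (μ * t) :=
        mul_lt_mul_of_pos_left hs (mul_pos hω hμ0)
      have p2 : ω₀ * μ * Real.cosh (ω₀ * t) ≤ ω₀ * μ * Real.cosh (μ * t) :=
        mul_le_mul_of_nonneg_left hc (mul_pos hω hμ0).le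
      have p3 : ω₀ * ω₀ * Real.sinh (ω₀ * t) < ω₀ * μ * Real.sinh (ω₀ * t) := by
        apply mul_lt_mul_of_pos_right _ hspos
        nlinarith
      nlinarith
  have := hmono (Set.self_mem_Ici) (Set.mem_Ici.2 hT.le) hT
  simp only [hh, mul_zero, Real.exp_zero, Real.cosh_zero, Real.sinh_zero] at this
  linarith

open Finset in
theorem slowly_oscillating_stable (μ T a A d : ℝ) (hμ : 0 < μ) (hT : 0 < T)
    (ha : (∃ ω : ℝ, 0 < ω ∧
            a = -(Real.exp (-(μ * T)) * (Real.cos (ω * T) + (μ / ω) * Real.sin (ω * T))))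
          ∨ (∃ ω₀ : ℝ, 0 < ω₀ ∧ ω₀ < μ ∧
            a = -(Real.exp (-(μ * T)) * (Real.cosh (ω₀ * T) + (μ / ω₀) * Real.sinh (ω₀ * T))))) :
    (∀ lam : ℝ,
      A * (∑ i ∈ range 0, lam ^ i) + d - (a + d) * lam ^ (0 : ℕ) + lam ^ (0 + 1) = 0 ↔ lam = a)
    ∧ |a| < 1 := by
  constructor
  · intro lam
    simp only [range_zero, sum_empty, mul_zero, pow_zero, mul_one, pow_one, zero_add]
    constructor <;> intro h <;> linarith
  · have hE : Real.exp (-(μ * T)) = (Real.exp (μ * T))⁻¹ := by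
      rw [Real.exp_neg]
    have hμT : 0 < μ * T := mul_pos hμ hT
    rcases ha with ⟨ω, hω, haeq⟩ | ⟨ω₀, hω₀, hωμ, haeq⟩
    · -- trig case
      have hωT : 0 < ω * T := mul_pos hω hT
      have hbound : |Real.cos (ω * T) + (μ / ω) * Real.sin (ω * T)| < Real.exp (μ * T) := by
        have h1 : |Real.cos (ω * T)| ≤ 1 := Real.abs_cos_le_one _
        have h2 : |Real.sin (ω * T)| ≤ ω * T := by
          have h := Real.abs_sin_le_abs (x := ω * T)
          rwa [abs_of_pos hωT] at h
        have h3 : |Real.cos (ω * T) + (μ / ω) * Real.sin (ω * T)| ≤ 1 + μ * T := by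
          calc |Real.cos (ω * T) + (μ / ω) * Real.sin (ω * T)|
              ≤ |Real.cos (ω * T)| + |(μ / ω) * Real.sin (ω * T)| := abs_add_le _ _
            _ ≤ 1 + (μ / ω) * (ω * T) := by
                rw [abs_mul, abs_of_pos (div_pos hμ hω)]
                have : (μ / ω) * |Real.sin (ω * T)| ≤ (μ / ω) * (ω * T) :=
                  mul_le_mul_of_nonneg_left h2 (div_pos hμ hω).le
                linarith
            _ = 1 + μ * T := by field_simp
        have h4 : (μ * T) + 1 < Real.exp (μ * T) := Real.add_one_lt_exp (ne_of_gt hμT)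
        linarith
      rw [haeq, abs_neg, abs_mul, abs_of_pos (Real.exp_pos _), hE,
        inv_mul_lt_iff₀ (Real.exp_pos _), mul_one]
      exact hbound
    · -- hyperbolic case
      have key := aux_hyp μ ω₀ T hω₀ hωμ hT
      have hs2 : 0 < Real.sinh (ω₀ * T) := by
        rw [← Real.sinh_zero]; exact Real.sinh_lt_sinh.2 (mul_pos hω₀ hT)
      have hbound : Real.cosh (ω₀ * T) + (μ / ω₀) * Real.sinh (ω₀ * T) < Real.exp (μ * T) := by
        rw [← sub_pos]
        have heq : Real.exp (μ * T) - (Real.cosh (ω₀ * T) + (μ / ω₀) * Real.sinh (ω₀ * T))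
            = (ω₀ * Real.exp (μ * T) - (ω₀ * Real.cosh (ω₀ * T) + μ * Real.sinh (ω₀ * T))) / ω₀ := by
          field_simp
        rw [heq]
        exact div_pos (by linarith) hω₀
      have hpos : 0 < Real.cosh (ω₀ * T) + (μ / ω₀) * Real.sinh (ω₀ * T) := by
        have h1 : 0 < Real.cosh (ω₀ * T) := Real.cosh_pos _
        have h2 : 0 < (μ / ω₀) * Real.sinh (ω₀ * T) :=
          mul_pos (div_pos hμ hω₀) hs2
        linarith
      rw [haeq, abs_neg, abs_mul, abs_of_pos (Real.exp_pos _), hE,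
        abs_of_pos hpos, inv_mul_lt_iff₀ (Real.exp_pos _), mul_one]
      exact hbound
end
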